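/- Lemma 2 (one-step decrease bound on the mixed-integer value function with a perfect model): for any x₀ ∈ ℝ^n and any u₀ ∈ ℝ^p with F x₀ + G u₀ ≤ h componentwise and V u₀ ∈ {0,1}^m, the horizon-T mixed-integer value function satisfies θ_T(A x₀ + B u₀) ≥ θ_T(x₀) − |Q x₀|² − |R u₀|², where the inequality is in the extended nonnegative reals [0, +∞]. -/
import Mathlib


open Matrix

/-- The squared Euclidean norm `|v|²` of a vector in `ℝ^k`. -/
noncomputable def sqNorm {k : ℕ} (v : Fin k → ℝ) : ℝ := ∑ i, v i ^ 2

variable {n p q r c m : ℕ}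

/-- Mixed-integer feasibility of a trajectory `((x_t)_{t=0}^S, (u_t)_{t=0}^{S-1})`
from the initial state `x̄`: dynamics, polyhedral constraints, and binary constraints
`V u_t ∈ {0,1}^m` hold for `t = 0,…,S−1`. -/
def MIFeasible (S : ℕ)
    (A : Matrix (Fin n) (Fin n) ℝ) (B : Matrix (Fin n) (Fin p) ℝ)
    (F : Matrix (Fin c) (Fin n) ℝ) (G : Matrix (Fin c) (Fin p) ℝ)
    (V : Matrix (Fin m) (Fin p) ℝ) (h : Fin c → ℝ)
    (xbar : Fin n → ℝ)
    (x : ℕ → Fin n → ℝ) (u : ℕ → Fin p → ℝ) : Prop :=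
  x 0 = xbar ∧
  (∀ t < S, x (t + 1) = A *ᵥ x t + B *ᵥ u t) ∧
  (∀ t < S, ∀ i, (F *ᵥ x t + G *ᵥ u t) i ≤ h i) ∧
  (∀ t < S, ∀ i, (V *ᵥ u t) i = 0 ∨ (V *ᵥ u t) i = 1)

/-- Cost `Σ_{t=0}^S |Q x_t|² + Σ_{t=0}^{S-1} |R u_t|²` of a trajectory of horizon `S`. -/
noncomputable def trajCost (S : ℕ) (Q : Matrix (Fin q) (Fin n) ℝ) (R : Matrix (Fin r) (Fin p) ℝ)
    (x : ℕ → Fin n → ℝ) (u : ℕ → Fin p → ℝ) : ℝ :=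
  ∑ t ∈ Finset.range (S + 1), sqNorm (Q *ᵥ x t) + ∑ t ∈ Finset.range S, sqNorm (R *ᵥ u t)

/-- The horizon-`S` mixed-integer value function `θ_S(x̄) ∈ [0, +∞]`: the infimum of the
costs of mixed-integer feasible trajectories from `x̄` (with `inf ∅ = +∞`). -/
noncomputable def miValue (S : ℕ)
    (A : Matrix (Fin n) (Fin n) ℝ) (B : Matrix (Fin n) (Fin p) ℝ)
    (Q : Matrix (Fin q) (Fin n) ℝ) (R : Matrix (Fin r) (Fin p) ℝ)
    (F : Matrix (Fin c) (Fin n) ℝ) (G : Matrix (Fin c) (Fin p) ℝ)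
    (V : Matrix (Fin m) (Fin p) ℝ) (h : Fin c → ℝ)
    (xbar : Fin n → ℝ) : ENNReal :=
  ⨅ (x : ℕ → Fin n → ℝ) (u : ℕ → Fin p → ℝ)
    (_ : MIFeasible S A B F G V h xbar x u), ENNReal.ofReal (trajCost S Q R x u)

/-- **Lemma 2 (one-step decrease bound on the mixed-integer value function with a
perfect model):** for any feasible control `u₀` at `x₀`, the horizon-`T` mixed-integer
value function satisfies `θ_T(A x₀ + B u₀) ≥ θ_T(x₀) − |Q x₀|² − |R u₀|²` in `[0, +∞]`
(with truncated subtraction). -/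
theorem value_function_one_step_decrease (n p q r c m T : ℕ) (hT : 1 ≤ T)
    (A : Matrix (Fin n) (Fin n) ℝ) (B : Matrix (Fin n) (Fin p) ℝ)
    (Q : Matrix (Fin q) (Fin n) ℝ) (R : Matrix (Fin r) (Fin p) ℝ)
    (F : Matrix (Fin c) (Fin n) ℝ) (G : Matrix (Fin c) (Fin p) ℝ)
    (V : Matrix (Fin m) (Fin p) ℝ) (h : Fin c → ℝ)
    (x0 : Fin n → ℝ) (u0 : Fin p → ℝ)
    (hfeas : ∀ i, (F *ᵥ x0 + G *ᵥ u0) i ≤ h i)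
    (hbin : ∀ i, (V *ᵥ u0) i = 0 ∨ (V *ᵥ u0) i = 1) :
    miValue T A B Q R F G V h x0
        - ENNReal.ofReal (sqNorm (Q *ᵥ x0) + sqNorm (R *ᵥ u0)) ≤
      miValue T A B Q R F G V h (A *ᵥ x0 + B *ᵥ u0) := by
  
  rw [tsub_le_iff_right]
  obtain ⟨S, rfl⟩ : ∃ S, T = S + 1 := ⟨T - 1, (Nat.succ_pred_eq_of_pos hT).symm⟩
  set y := A *ᵥ x0 + B *ᵥ u0 with hy
  have key : ∀ (x : ℕ → Fin n → ℝ) (u : ℕ → Fin p → ℝ),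
      MIFeasible (S + 1) A B F G V h y x u →
      miValue (S + 1) A B Q R F G V h x0 ≤
        ENNReal.ofReal (trajCost (S + 1) Q R x u) +
          ENNReal.ofReal (sqNorm (Q *ᵥ x0) + sqNorm (R *ᵥ u0)) := by
    intro x u hfe
    obtain ⟨hx0, hdyn, hcon, hbin'⟩ := hfe
    set x' : ℕ → Fin n → ℝ := fun t => Nat.casesOn t x0 x with hx'
    set u' : ℕ → Fin p → ℝ := fun t => Nat.casesOn t u0 u with hu'
    have hfeas' : MIFeasible (S + 1) A B F G V h x0 x' u' := by
      refine ⟨rfl, ?_, ?_, ?_⟩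
      · intro t ht
        cases t with
        | zero => simpa [x', u'] using hx0
        | succ s => exact hdyn s (by omega)
      · intro t ht
        cases t with
        | zero => simpa [x', u'] using hfeas
        | succ s => exact hcon s (by omega)
      · intro t ht
        cases t with
        | zero => simpa [u'] using hbin
        | succ s => exact hbin' s (by omega)
    have h1 : miValue (S + 1) A B Q R F G V h x0 ≤
        ENNReal.ofReal (trajCost (S + 1) Q R x' u') := by
      refine iInf_le_of_le x' (iInf_le_of_le u' (iInf_le_of_le hfeas' le_rfl))
    refine h1.trans ?_
    have hnn : ∀ (k : ℕ) (v : Fin k → ℝ), 0 ≤ sqNorm v := by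
      intro k v
      exact Finset.sum_nonneg fun i _ => sq_nonneg _
    have hcost : trajCost (S + 1) Q R x' u' ≤
        trajCost (S + 1) Q R x u + (sqNorm (Q *ᵥ x0) + sqNorm (R *ᵥ u0)) := by
      unfold trajCost
      rw [Finset.sum_range_succ' (fun t => sqNorm (Q *ᵥ x' t)),
        Finset.sum_range_succ' (fun t => sqNorm (R *ᵥ u' t))]
      have e1 : ∀ t, x' (t + 1) = x t := fun t => rfl
      have e2 : x' 0 = x0 := rfl
      have e3 : ∀ t, u' (t + 1) = u t := fun t => rfl
      have e4 : u' 0 = u0 := rfl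
      simp only [e1, e2, e3, e4]
      have hA : ∑ t ∈ Finset.range (S + 1), sqNorm (Q *ᵥ x t) ≤
          ∑ t ∈ Finset.range (S + 1 + 1), sqNorm (Q *ᵥ x t) := by
        refine Finset.sum_le_sum_of_subset_of_nonneg ?_ (fun i _ _ => hnn _ _)
        exact Finset.range_subset_range.2 (by omega)
      have hB : ∑ t ∈ Finset.range S, sqNorm (R *ᵥ u t) ≤
          ∑ t ∈ Finset.range (S + 1), sqNorm (R *ᵥ u t) := by
        refine Finset.sum_le_sum_of_subset_of_nonneg ?_ (fun i _ _ => hnn _ _)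
        exact Finset.range_subset_range.2 (by omega)
      linarith
    calc ENNReal.ofReal (trajCost (S + 1) Q R x' u')
        ≤ ENNReal.ofReal (trajCost (S + 1) Q R x u +
            (sqNorm (Q *ᵥ x0) + sqNorm (R *ᵥ u0))) := ENNReal.ofReal_le_ofReal hcost
      _ ≤ _ := ENNReal.ofReal_add_le
  conv_rhs => rw [miValue]
  rw [ENNReal.iInf_add]
  refine le_iInf fun x => ?_
  rw [ENNReal.iInf_add]
  refine le_iInf fun u => ?_
  rw [ENNReal.iInf_add]
  exact le_iInf fun hfe => key x u hfe
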